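/- Let r, b, δ, d > 0 and let x* > 0 satisfy r·(x*)^{δ−1} = 1 + (x*)^δ + b·(x*)^d (so (x*,x*) is a fixed point of the symmetric competition map G(x,y) = (r·x^δ/(1+x^δ+b·y^d), r·y^δ/(1+y^δ+b·x^d))). Then, with D = 1 + (x*)^δ + b·(x*)^d, the Jacobian matrix of G at (x*,x*) equals the 2×2 matrix with diagonal entries δ(1+b(x*)^d)/D and off-diagonal entries −b·d·(x*)^d/D, and its eigenvalues are λ₁ = (δ + b(δ−d)(x*)^d)/D and λ₂ = (δ + b(δ+d)(x*)^d)/D. In particular, both eigenvalues have absolute value less than 1 if and only if |δ + b(δ−d)(x*)^d| < D and δ + b(δ+d)(x*)^d < D. -/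

import Mathlib

/-- At a symmetric interior equilibrium `(x, x)` of the symmetric competition
map `G`, the Jacobian matrix equals `!![δ(1+b x^d)/D, -b d x^d/D; -b d x^d/D,
δ(1+b x^d)/D]` (stated via the four partial derivatives), its eigenvalues are
`λ₁ = (δ + b(δ-d)x^d)/D` and `λ₂ = (δ + b(δ+d)x^d)/D`, and both eigenvalues
have absolute value less than `1` iff `|δ + b(δ-d)x^d| < D` and
`δ + b(δ+d)x^d < D`. -/
theorem stmt_19 (r b δ d : ℝ) (hr : 0 < r) (hb : 0 < b) (hδ : 0 < δ)
    (hd : 0 < d) (x : ℝ) (hx : 0 < x)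
    (hfix : r * x ^ (δ - 1) = 1 + x ^ δ + b * x ^ d)
    (G : ℝ × ℝ → ℝ × ℝ)
    (hG : ∀ u v : ℝ, G (u, v) =
      (r * u ^ δ / (1 + u ^ δ + b * v ^ d),
       r * v ^ δ / (1 + v ^ δ + b * u ^ d)))
    (D : ℝ) (hD : D = 1 + x ^ δ + b * x ^ d)
    (J : Matrix (Fin 2) (Fin 2) ℝ)
    (hJ : J = !![δ * (1 + b * x ^ d) / D, -(b * d * x ^ d) / D;
                 -(b * d * x ^ d) / D, δ * (1 + b * x ^ d) / D])
    (lam₁ lam₂ : ℝ)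
    (hlam₁ : lam₁ = (δ + b * (δ - d) * x ^ d) / D)
    (hlam₂ : lam₂ = (δ + b * (δ + d) * x ^ d) / D) :
    HasDerivAt (fun u : ℝ => (G (u, x)).1) (δ * (1 + b * x ^ d) / D) x ∧
    HasDerivAt (fun v : ℝ => (G (x, v)).1) (-(b * d * x ^ d) / D) x ∧
    HasDerivAt (fun u : ℝ => (G (u, x)).2) (-(b * d * x ^ d) / D) x ∧
    HasDerivAt (fun v : ℝ => (G (x, v)).2) (δ * (1 + b * x ^ d) / D) x ∧
    J.mulVec ![1, 1] = lam₁ • ![1, 1] ∧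
    J.mulVec ![1, -1] = lam₂ • ![1, -1] ∧
    ((|lam₁| < 1 ∧ |lam₂| < 1) ↔
      (|δ + b * (δ - d) * x ^ d| < D ∧ δ + b * (δ + d) * x ^ d < D)) := by
  have hx' : x ≠ 0 := hx.ne'
  have hxδ : (0:ℝ) < x ^ δ := Real.rpow_pos_of_pos hx δ
  have hxd : (0:ℝ) < x ^ d := Real.rpow_pos_of_pos hx d
  have hD0 : 0 < D := by rw [hD]; positivity
  have hDne : (1 + x ^ δ + b * x ^ d) ≠ 0 := by rw [← hD]; exact hD0.ne'
  have hE : x ^ δ = x ^ (δ - 1) * x := by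
    rw [← Real.rpow_add_one hx']; norm_num
  have hEd : x ^ d = x ^ (d - 1) * x := by
    rw [← Real.rpow_add_one hx']; norm_num
  have hrs : r * x ^ (δ - 1) = D := by rw [hD]; exact hfix
  have h1 : HasDerivAt (fun u : ℝ => u ^ δ) (δ * x ^ (δ - 1)) x :=
    Real.hasDerivAt_rpow_const (Or.inl hx')
  have h1d : HasDerivAt (fun u : ℝ => u ^ d) (d * x ^ (d - 1)) x :=
    Real.hasDerivAt_rpow_const (Or.inl hx')
  -- derivative of u ↦ r u^δ / (1 + u^δ + c)
  have hA : HasDerivAt (fun u : ℝ => r * u ^ δ / (1 + u ^ δ + b * x ^ d))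
      (δ * (1 + b * x ^ d) / D) x := by
    have hnum := h1.const_mul r
    have hden : HasDerivAt (fun u : ℝ => 1 + u ^ δ + b * x ^ d)
        (δ * x ^ (δ - 1)) x := by
      simpa using ((h1.const_add 1).add_const (b * x ^ d))
    have h : HasDerivAt (fun u : ℝ => r * u ^ δ / (1 + u ^ δ + b * x ^ d)) _ x :=
      hnum.div hden hDne
    convert h using 1
    rw [← hD, div_eq_div_iff hD0.ne' (pow_ne_zero 2 hD0.ne')]
    linear_combination D * (δ * x ^ δ - δ * D) * hrs - δ * D ^ 2 * hD
  have hB : HasDerivAt (fun v : ℝ => r * x ^ δ / (1 + x ^ δ + b * v ^ d))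
      (-(b * d * x ^ d) / D) x := by
    have hden : HasDerivAt (fun v : ℝ => 1 + x ^ δ + b * v ^ d)
        (b * (d * x ^ (d - 1))) x := (h1d.const_mul b).const_add (1 + x ^ δ)
    have h : HasDerivAt (fun v : ℝ => r * x ^ δ / (1 + x ^ δ + b * v ^ d)) _ x :=
      (hasDerivAt_const x (r * x ^ δ)).div hden hDne
    convert h using 1
    rw [← hD, div_eq_div_iff hD0.ne' (pow_ne_zero 2 hD0.ne')]
    linear_combination b * d * x ^ (d - 1) * x * D * hrs +
      b * d * x ^ (d - 1) * r * D * hE - b * d * D ^ 2 * hEd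
  refine ⟨by simpa only [hG] using hA, by simpa only [hG] using hB,
    by simpa only [hG] using hB, by simpa only [hG] using hA, ?_, ?_, ?_⟩
  · subst hJ hlam₁
    funext i
    fin_cases i <;>
      simp [Matrix.mulVec, Matrix.vecHead, Matrix.vecTail, Fin.sum_univ_two] <;>
      field_simp <;> ring
  · subst hJ hlam₂
    funext i
    fin_cases i <;>
      simp [Matrix.mulVec, Matrix.vecHead, Matrix.vecTail, Fin.sum_univ_two] <;>
      field_simp <;> ring
  · subst hlam₁ hlam₂
    have habs1 : |(δ + b * (δ - d) * x ^ d) / D| < 1 ↔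
        |δ + b * (δ - d) * x ^ d| < D := by
      rw [abs_div, abs_of_pos hD0, div_lt_one hD0]
    have hpos2 : 0 < δ + b * (δ + d) * x ^ d := by positivity
    have habs2 : |(δ + b * (δ + d) * x ^ d) / D| < 1 ↔
        δ + b * (δ + d) * x ^ d < D := by
      rw [abs_of_pos (div_pos hpos2 hD0), div_lt_one hD0]
    rw [habs1, habs2]
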